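/- Let (G,H) be an Eulerian instance with three pairs of terminals, H = (VG, {s1t1, s2t2, s3t3}). If there exist edge-disjoint paths P1 from s1 to t1 and P2 from s2 to t2 in G, then there also exists a path P3 from s3 to t3 in G that is edge-disjoint from both P1 and P2; that is, (G,H) is feasible. -/

import Mathlib

/-!
We encode a multigraph on vertex type `V` with edge-index type `E` by a map
`G : E → V × V`: the edge with index `e` joins the (unordered) endpoints
`(G e).1` and `(G e).2`.
-/

/-- The degree of `v` in the multigraph `G`: the number of edge-ends of `G`
incident to `v` (a loop counts twice). -/
noncomputable def mdeg {V E : Type} (G : E → V × V) (v : V) : ℕ :=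
  Set.ncard {p : E × Bool | (cond p.2 (G p.1).1 (G p.1).2) = v}

/-- `mcut G U` is `d_G(U)`: the number of edges of `G` having exactly one
endpoint in `U`. -/
noncomputable def mcut {V E : Type} (G : E → V × V) (U : Set V) : ℕ :=
  Set.ncard {e : E | ((G e).1 ∈ U ∧ (G e).2 ∉ U) ∨ ((G e).2 ∈ U ∧ (G e).1 ∉ U)}

/-- Walks in the multigraph `G`; an edge may be traversed in either direction. -/
inductive MWalk {V E : Type} (G : E → V × V) : V → V → Type where
  | nil (v : V) : MWalk G v v
  | cons {u v w : V} (e : E) (he : G e = (u, v) ∨ G e = (v, u)) (tail : MWalk G v w) :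
      MWalk G u w

namespace MWalk
/-- The list of edges traversed by a walk. -/
def edges {V E : Type} {G : E → V × V} : {u v : V} → MWalk G u v → List E
  | _, _, nil _ => []
  | _, _, cons e _ p => e :: p.edges
end MWalk

/-- An instance `(G, H)` (`H` is the demand multigraph, on the same vertex set)
is feasible if the demand edges can be routed by pairwise edge-disjoint paths
of `G`: for each demand edge `i` there is a walk of `G` connecting its two
endpoints, the walks being pairwise edge-disjoint. -/
def MFeasible {V E E' : Type} (G : E → V × V) (H : E' → V × V) : Prop :=
  ∃ P : (i : E') → MWalk G (H i).1 (H i).2,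
    ∀ i j : E', i ≠ j → List.Disjoint (P i).edges (P j).edges

/-- The multigraph `G` is connected (all of its vertex set lies in one
connected component). -/
def MConnected {V E : Type} (G : E → V × V) : Prop :=
  ∀ u v : V, Nonempty (MWalk G u v)

/-- The subgraph `G[U]` induced by `U` is connected: any two vertices of `U`
are joined by a walk all of whose edges have both endpoints in `U`. -/
def MInducedConnected {V E : Type} (G : E → V × V) (U : Set V) : Prop :=
  ∀ u ∈ U, ∀ v ∈ U, ∃ p : MWalk G u v, ∀ e ∈ p.edges, (G e).1 ∈ U ∧ (G e).2 ∈ U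

/-- The instance `(G, H)` is Eulerian: every vertex of `G + H` has even degree. -/
def MEulerian {V E E' : Type} (G : E → V × V) (H : E' → V × V) : Prop :=
  ∀ v : V, Even (mdeg G v + mdeg H v)


open Classical in
/-- Number of ends of edge `e` at vertex `v` (a loop counts twice). -/
noncomputable def inc {V E : Type} (G : E → V × V) (e : E) (v : V) : ℕ :=
  (if (G e).1 = v then 1 else 0) + (if (G e).2 = v then 1 else 0)

lemma mdeg_eq_sum {V E : Type} [Fintype E] (G : E → V × V) (v : V) :
    mdeg G v = ∑ e, inc G e v := by
  classical
  rw [mdeg, Set.ncard_eq_toFinset_card', Set.toFinset_setOf, Finset.card_filter,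
    Fintype.sum_prod_type]
  refine Finset.sum_congr rfl fun x _ => ?_
  by_cases h1 : (G x).1 = v <;> by_cases h2 : (G x).2 = v <;>
    simp [Finset.filter_insert, Finset.filter_singleton, h1, h2, inc]

open Classical in
lemma walk_parity {V E : Type} (G : E → V × V) {u v : V} (p : MWalk G u v) (w : V) :
    (((p.edges.map fun e => inc G e w).sum : ℕ) : ZMod 2) =
      (if w = u then 1 else 0) + (if w = v then 1 else 0) := by
  induction p with
  | nil x => simp [MWalk.edges]; exact (CharTwo.add_self_eq_zero _).symm
  | cons e he tail ih =>
    rename_i a b c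
    have h1 : ((inc G e w : ℕ) : ZMod 2) =
        (if w = a then 1 else 0) + (if w = b then 1 else 0) := by
      rcases he with h | h <;> simp [inc, h, eq_comm] <;> ring
    simp only [MWalk.edges, List.map_cons, List.sum_cons]
    rw [Nat.cast_add, h1, ih]
    linear_combination CharTwo.add_self_eq_zero (if w = b then (1 : ZMod 2) else 0)

open Classical in
lemma exists_trail {V E : Type} (G : E → V × V) (A : Finset E) :
    ∀ (s t : V), s ≠ t →
      (∀ w : V, ((∑ e ∈ A, inc G e w : ℕ) : ZMod 2) =
        (if w = s then 1 else 0) + (if w = t then 1 else 0)) →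
      ∃ p : MWalk G s t, p.edges.Nodup ∧ ∀ e ∈ p.edges, e ∈ A := by
  classical
  induction A using Finset.strongInduction with
  | _ A ih =>
    intro s t hst hpar
    have hs : ((∑ e ∈ A, inc G e s : ℕ) : ZMod 2) = 1 := by
      rw [hpar s]; simp [hst]
    have hsum_ne : ∑ e ∈ A, inc G e s ≠ 0 := by
      intro h; rw [h] at hs; simp at hs
    obtain ⟨e, heA, hinc⟩ := Finset.exists_ne_zero_of_sum_ne_zero hsum_ne
    have hend : (G e).1 = s ∨ (G e).2 = s := by
      by_contra hc; push_neg at hc; simp [inc, hc.1, hc.2] at hinc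
    obtain ⟨u, he⟩ : ∃ u, G e = (s, u) ∨ G e = (u, s) := by
      rcases hend with h | h
      · exact ⟨(G e).2, Or.inl (by rw [← h])⟩
      · exact ⟨(G e).1, Or.inr (by rw [← h])⟩
    have hBsub : A.erase e ⊂ A := Finset.erase_ssubset heA
    have hincw : ∀ w, ((inc G e w : ℕ) : ZMod 2) =
        (if w = s then 1 else 0) + (if w = u then 1 else 0) := by
      intro w; rcases he with h | h <;> simp [inc, h, eq_comm] <;> ring
    have hparB : ∀ w, ((∑ x ∈ A.erase e, inc G x w : ℕ) : ZMod 2) =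
        (if w = t then 1 else 0) + (if w = u then 1 else 0) := by
      intro w
      have hsplit : ∑ x ∈ A.erase e, inc G x w + inc G e w = ∑ x ∈ A, inc G x w :=
        Finset.sum_erase_add A _ heA
      have hcast : ((∑ x ∈ A.erase e, inc G x w : ℕ) : ZMod 2) + ((inc G e w : ℕ) : ZMod 2)
          = ((∑ x ∈ A, inc G x w : ℕ) : ZMod 2) := by exact_mod_cast congrArg Nat.cast hsplit
      rw [hincw w, hpar w] at hcast
      linear_combination hcast - CharTwo.add_self_eq_zero (if w = u then (1 : ZMod 2) else 0)
    by_cases hut : u = t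
    · subst hut
      refine ⟨MWalk.cons e he (MWalk.nil u), by simp [MWalk.edges], ?_⟩
      intro x hx
      simp only [MWalk.edges, List.mem_cons, List.not_mem_nil, or_false] at hx
      subst hx; exact heA
    · by_cases hus : u = s
      · obtain ⟨p, hnd, hsub⟩ := ih (A.erase e) hBsub s t hst
          (fun w => (hparB w).trans (by rw [hus]; ring))
        exact ⟨p, hnd, fun x hx => Finset.mem_of_mem_erase (hsub x hx)⟩
      · obtain ⟨p, hnd, hsub⟩ := ih (A.erase e) hBsub u t hut
          (fun w => (hparB w).trans (add_comm _ _))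
        refine ⟨MWalk.cons e he p, ?_, ?_⟩
        · refine List.nodup_cons.mpr ⟨fun hmem => ?_, hnd⟩
          exact (Finset.notMem_erase e A) (hsub e hmem)
        · intro x hx
          rcases List.mem_cons.mp hx with rfl | hx
          · exact heA
          · exact Finset.mem_of_mem_erase (hsub x hx)

/-- Let `(G, H)` be an Eulerian instance with three pairs of
terminals. If there are edge-disjoint paths `P₁ : s₁–t₁` and `P₂ : s₂–t₂` in
`G`, then there is also a path `P₃ : s₃–t₃` in `G` edge-disjoint from both;
that is, `(G, H)` is feasible. -/
theorem statement2 {V E : Type} [Fintype E]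
    (G : E → V × V) (s1 t1 s2 t2 s3 t3 : V)
    (H : Fin 3 → V × V) (hH : H = ![(s1, t1), (s2, t2), (s3, t3)])
    (euler : MEulerian G H)
    (P1 : MWalk G s1 t1) (P2 : MWalk G s2 t2)
    (hP1 : P1.edges.Nodup) (hP2 : P2.edges.Nodup)
    (hdisj : P1.edges.Disjoint P2.edges) :
    (∃ P3 : MWalk G s3 t3, P3.edges.Nodup ∧
        P3.edges.Disjoint P1.edges ∧ P3.edges.Disjoint P2.edges) ∧
      MFeasible G H := by
  classical
  subst hH
  set S : List E := P1.edges ++ P2.edges with hS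
  have hSnd : S.Nodup := hP1.append hP2 hdisj
  set A : Finset E := S.toFinsetᶜ with hA
  have key : ∀ w : V, ((∑ e ∈ A, inc G e w : ℕ) : ZMod 2) =
      (if w = s3 then 1 else 0) + (if w = t3 then 1 else 0) := by
    intro w
    obtain ⟨r, hr⟩ := euler w
    have e3 : ((mdeg G w : ℕ) : ZMod 2)
        + ((mdeg (![(s1, t1), (s2, t2), (s3, t3)]) w : ℕ) : ZMod 2) = 0 := by
      have : ((mdeg G w + mdeg (![(s1, t1), (s2, t2), (s3, t3)]) w : ℕ) : ZMod 2)
          = ((r + r : ℕ) : ZMod 2) := by exact_mod_cast congrArg Nat.cast hr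
      push_cast at this
      rw [this]
      exact CharTwo.add_self_eq_zero _
    have e4 : ((mdeg (![(s1, t1), (s2, t2), (s3, t3)]) w : ℕ) : ZMod 2) =
        ((if w = s1 then 1 else 0) + (if w = t1 then 1 else 0)
          + ((if w = s2 then 1 else 0) + (if w = t2 then 1 else 0))
          + ((if w = s3 then 1 else 0) + (if w = t3 then 1 else 0)) : ZMod 2) := by
      rw [mdeg_eq_sum, Fin.sum_univ_three]
      push_cast
      simp only [inc]
      rw [show (![(s1, t1), (s2, t2), (s3, t3)] : Fin 3 → V × V) 0 = (s1, t1) from rfl,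
        show (![(s1, t1), (s2, t2), (s3, t3)] : Fin 3 → V × V) 1 = (s2, t2) from rfl,
        show (![(s1, t1), (s2, t2), (s3, t3)] : Fin 3 → V × V) 2 = (s3, t3) from rfl]
      simp only [eq_comm]
      push_cast
      ring
    have e1 : ((∑ x ∈ S.toFinset, inc G x w : ℕ) : ZMod 2)
        + ((∑ x ∈ A, inc G x w : ℕ) : ZMod 2) = ((mdeg G w : ℕ) : ZMod 2) := by
      rw [mdeg_eq_sum]
      exact_mod_cast congrArg Nat.cast (Finset.sum_add_sum_compl S.toFinset _)
    have e2 : ((∑ x ∈ S.toFinset, inc G x w : ℕ) : ZMod 2) =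
        ((if w = s1 then 1 else 0) + (if w = t1 then 1 else 0)
          + ((if w = s2 then 1 else 0) + (if w = t2 then 1 else 0)) : ZMod 2) := by
      have h1 : S.toFinset.sum (fun x => inc G x w) = (S.map fun x => inc G x w).sum :=
        List.sum_toFinset _ hSnd
      have h2 : (S.map fun x => inc G x w).sum
          = (P1.edges.map fun x => inc G x w).sum + (P2.edges.map fun x => inc G x w).sum := by
        rw [hS, List.map_append, List.sum_append]
      rw [h1, h2, Nat.cast_add, walk_parity G P1 w, walk_parity G P2 w]
    linear_combination e1 + e3 - e4 - e2
      - CharTwo.add_self_eq_zero (if w = s1 then (1 : ZMod 2) else 0)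
      - CharTwo.add_self_eq_zero (if w = t1 then (1 : ZMod 2) else 0)
      - CharTwo.add_self_eq_zero (if w = s2 then (1 : ZMod 2) else 0)
      - CharTwo.add_self_eq_zero (if w = t2 then (1 : ZMod 2) else 0)
      - CharTwo.add_self_eq_zero (if w = s3 then (1 : ZMod 2) else 0)
      - CharTwo.add_self_eq_zero (if w = t3 then (1 : ZMod 2) else 0)
  have main : ∃ P3 : MWalk G s3 t3, P3.edges.Nodup ∧
      P3.edges.Disjoint P1.edges ∧ P3.edges.Disjoint P2.edges := by
    by_cases hst : s3 = t3
    · subst hst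
      exact ⟨MWalk.nil s3, by simp [MWalk.edges], by simp [MWalk.edges, List.Disjoint],
        by simp [MWalk.edges, List.Disjoint]⟩
    · obtain ⟨p, hnd, hsub⟩ := exists_trail G A s3 t3 hst key
      have hnotS : ∀ x ∈ p.edges, x ∉ S := by
        intro x hx
        have := hsub x hx
        rw [hA, Finset.mem_compl] at this
        simpa using this
      refine ⟨p, hnd, ?_, ?_⟩
      · intro x hx hx1
        exact hnotS x hx (by rw [hS]; exact List.mem_append_left _ hx1)
      · intro x hx hx2
        exact hnotS x hx (by rw [hS]; exact List.mem_append_right _ hx2)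
  refine ⟨main, ?_⟩
  obtain ⟨P3, h3nd, h31, h32⟩ := main
  refine ⟨fun i => match i with | 0 => P1 | 1 => P2 | 2 => P3, ?_⟩
  intro i j hij
  fin_cases i <;> fin_cases j <;>
    first
      | exact absurd rfl hij
      | exact hdisj
      | exact hdisj.symm
      | exact h31
      | exact h31.symm
      | exact h32
      | exact h32.symm
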